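/- Let G be a nonabelian group of order p³ for a prime p. Then CD(G) = {H : Z(G) ≤ H ≤ G} and |CD(G)| = p + 3. -/

import Mathlib

noncomputable def mCD {G : Type*} [Group G] (H : Subgroup G) : ℕ :=
  Nat.card H * Nat.card (Subgroup.centralizer (H : Set G))

noncomputable def mStar (G : Type*) [Group G] : ℕ :=
  sSup (Set.range fun H : Subgroup G => mCD H)

noncomputable def CD (G : Type*) [Group G] : Set (Subgroup G) :=
  {H | mCD H = mStar G}

noncomputable def deltaCD (G : Type*) [Group G] : ℕ :=
  Nat.card {H : Subgroup G // H ∉ CD G}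

section Count

lemma aux_orderOf {p : ℕ} [Fact p.Prime] {Q : Type*} [Group Q] [Finite Q]
    (hQ : Nat.card Q = p ^ 2) (hnc : ¬ IsCyclic Q) {x : Q} (hx : x ≠ 1) :
    orderOf x = p := by
  have hp := Fact.out (p := p.Prime)
  have hdvd : orderOf x ∣ p ^ 2 := hQ ▸ orderOf_dvd_natCard x
  obtain ⟨k, hk2, hke⟩ := (Nat.dvd_prime_pow hp).1 hdvd
  interval_cases k
  · simp [orderOf_eq_one_iff] at hke; exact absurd hke hx
  · simpa using hke
  · exfalso
    apply hnc
    have htop : Subgroup.zpowers x = ⊤ := by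
      apply Subgroup.eq_top_of_card_eq
      rw [Nat.card_zpowers, hke, hQ]
    refine ⟨⟨x, fun y => ?_⟩⟩
    have hy : y ∈ Subgroup.zpowers x := by rw [htop]; trivial
    exact hy

lemma aux_zpowers_eq {p : ℕ} [Fact p.Prime] {Q : Type*} [Group Q] [Finite Q]
    (hQ : Nat.card Q = p ^ 2) (hnc : ¬ IsCyclic Q) {K : Subgroup Q}
    (hK : Nat.card K = p) {x : Q} (hx : x ∈ K) (hx1 : x ≠ 1) :
    Subgroup.zpowers x = K := by
  apply Subgroup.eq_of_le_of_card_ge (Subgroup.zpowers_le.2 hx)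
  rw [Nat.card_zpowers, aux_orderOf hQ hnc hx1, hK]

lemma aux_count {p : ℕ} [Fact p.Prime] {Q : Type*} [Group Q] [Finite Q]
    (hQ : Nat.card Q = p ^ 2) (hnc : ¬ IsCyclic Q) :
    Nat.card (Subgroup Q) = p + 3 := by
  classical
  have hp := Fact.out (p := p.Prime)
  have hp1 : 1 < p := hp.one_lt
  haveI : Fintype Q := Fintype.ofFinite Q
  haveI : Finite (Subgroup Q) :=
    Finite.of_injective (fun K => (K : Set Q)) SetLike.coe_injective
  haveI : Fintype (Subgroup Q) := Fintype.ofFinite _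
  have hclass : ∀ K : Subgroup Q, K = ⊥ ∨ K = ⊤ ∨ Nat.card K = p := by
    intro K
    have hdvd : Nat.card K ∣ p ^ 2 := hQ ▸ Subgroup.card_subgroup_dvd_card K
    obtain ⟨k, hk2, hke⟩ := (Nat.dvd_prime_pow hp).1 hdvd
    interval_cases k
    · exact Or.inl (Subgroup.eq_bot_of_card_eq K (by simpa using hke))
    · exact Or.inr (Or.inr (by simpa using hke))
    · exact Or.inr (Or.inl (Subgroup.eq_top_of_card_eq K (by rw [hke, hQ])))
  set t : Finset (Subgroup Q) := Finset.univ.filter (fun K => Nat.card K = p) with ht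
  have hcard_t : t.card * (p - 1) = p ^ 2 - 1 := by
    have hmaps : ∀ x ∈ Finset.univ.filter (fun x : Q => x ≠ 1),
        Subgroup.zpowers x ∈ t := by
      intro x hx
      simp only [Finset.mem_filter, Finset.mem_univ, true_and] at hx ⊢
      rw [ht]
      simp only [Finset.mem_filter, Finset.mem_univ, true_and]
      rw [Nat.card_zpowers, aux_orderOf hQ hnc hx]
    have := Finset.card_eq_sum_card_fiberwise hmaps
    have hfib : ∀ K ∈ t, ((Finset.univ.filter (fun x : Q => x ≠ 1)).filter
        (fun x => Subgroup.zpowers x = K)).card = p - 1 := by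
      intro K hK
      rw [ht] at hK
      simp only [Finset.mem_filter, Finset.mem_univ, true_and] at hK
      have hset : (Finset.univ.filter (fun x : Q => x ≠ 1)).filter
          (fun x => Subgroup.zpowers x = K) =
          (Finset.univ.filter (fun x : Q => x ∈ K)).erase 1 := by
        ext x
        simp only [Finset.mem_filter, Finset.mem_univ, true_and, Finset.mem_erase]
        constructor
        · rintro ⟨hx1, rfl⟩
          exact ⟨hx1, Subgroup.mem_zpowers x⟩
        · rintro ⟨hx1, hxK⟩
          exact ⟨hx1, aux_zpowers_eq hQ hnc hK hxK hx1⟩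
      rw [hset, Finset.card_erase_of_mem (by simp [K.one_mem])]
      congr 1
      rw [← Fintype.card_subtype]
      rw [← Nat.card_eq_fintype_card]
      exact hK
    rw [Finset.sum_congr rfl hfib, Finset.sum_const, smul_eq_mul] at this
    rw [← this]
    have : (Finset.univ.filter (fun x : Q => x ≠ 1)) = Finset.univ.erase 1 := by
      ext x; simp [eq_comm]
    rw [this, Finset.card_erase_of_mem (Finset.mem_univ 1), Finset.card_univ,
      ← Nat.card_eq_fintype_card, hQ]
  have htcard : t.card = p + 1 := by
    have h1 : (p + 1) * (p - 1) = p ^ 2 - 1 := by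
      obtain ⟨q, rfl⟩ := Nat.exists_eq_add_of_le hp1.le
      have e0 : 1 + q - 1 = q := by omega
      have e1 : (1 + q + 1) * (1 + q - 1) = q * q + 2 * q := by rw [e0]; ring
      have e2 : (1 + q) ^ 2 = q * q + 2 * q + 1 := by ring
      omega
    have hpos : 0 < p - 1 := by omega
    exact Nat.eq_of_mul_eq_mul_right hpos (by rw [hcard_t, h1])
  have huniv : (Finset.univ : Finset (Subgroup Q)) = insert ⊥ (insert ⊤ t) := by
    ext K
    simp only [Finset.mem_univ, true_iff, Finset.mem_insert, ht, Finset.mem_filter]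
    rcases hclass K with h | h | h
    · exact Or.inl h
    · exact Or.inr (Or.inl h)
    · exact Or.inr (Or.inr (by simp [ht, ← Nat.card_eq_fintype_card, h]))
  have hbot_card : Nat.card ((⊥ : Subgroup Q) : Subgroup Q) = 1 := Subgroup.card_bot
  have htop_card : Nat.card ((⊤ : Subgroup Q) : Subgroup Q) = p ^ 2 := by
    rw [Subgroup.card_top, hQ]
  have hbn : (⊥ : Subgroup Q) ∉ insert ⊤ t := by
    simp only [Finset.mem_insert, ht, Finset.mem_filter, Finset.mem_univ, true_and]
    push_neg
    constructor
    · intro h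
      have := htop_card
      rw [← h, hbot_card] at this
      nlinarith
    · rw [hbot_card]; omega
  have htn : (⊤ : Subgroup Q) ∉ t := by
    simp only [ht, Finset.mem_filter, Finset.mem_univ, true_and, htop_card]
    nlinarith
  rw [Nat.card_eq_fintype_card, ← Finset.card_univ, huniv,
    Finset.card_insert_of_notMem hbn, Finset.card_insert_of_notMem htn, htcard]

end Count

section Main
variable {p : ℕ} [Fact p.Prime] {G : Type*} [Group G] [Finite G]

lemma aux_center_card (hcard : Nat.card G = p ^ 3)
    (hna : ¬ ∀ a b : G, a * b = b * a) : Nat.card (Subgroup.center G) = p := by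
  have hp := Fact.out (p := p.Prime)
  have hpg : IsPGroup p G := IsPGroup.of_card hcard
  haveI : Nontrivial G := Finite.one_lt_card_iff_nontrivial.1
    (by rw [hcard]; exact Nat.one_lt_pow (by norm_num) hp.one_lt)
  haveI := IsPGroup.center_nontrivial hpg
  have hdvd : Nat.card (Subgroup.center G) ∣ p ^ 3 :=
    hcard ▸ Subgroup.card_subgroup_dvd_card _
  obtain ⟨k, hk3, hke⟩ := (Nat.dvd_prime_pow hp).1 hdvd
  have hk1 : 1 ≤ k := by
    rcases Nat.eq_zero_or_pos k with rfl | h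
    · have h1 : 1 < Nat.card (Subgroup.center G) :=
        Finite.one_lt_card_iff_nontrivial.2 inferInstance
      rw [hke] at h1; simp at h1
    · exact h
  have hk2 : k < 2 := by
    by_contra h
    push_neg at h
    apply hna
    have hqcard : Nat.card (G ⧸ Subgroup.center G) * p ^ k = p ^ 3 := by
      rw [← hke, ← hcard]
      exact (Subgroup.card_eq_card_quotient_mul_card_subgroup _).symm
    have hqdvd : Nat.card (G ⧸ Subgroup.center G) ∣ p := by
      interval_cases k
      · have h2 : p ^ 3 = p * p ^ 2 := by ring
        rw [h2] at hqcard
        have := Nat.eq_of_mul_eq_mul_right (pow_pos hp.pos 2) hqcard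
        rw [this]
      · have := Nat.eq_of_mul_eq_mul_right (pow_pos hp.pos 3)
          (hqcard.trans (one_mul (p ^ 3)).symm)
        rw [this]
        exact one_dvd p
    haveI : IsCyclic (G ⧸ Subgroup.center G) := isCyclic_of_card_dvd_prime hqdvd
    exact commutative_of_cyclic_center_quotient (QuotientGroup.mk' _)
      (le_of_eq (QuotientGroup.ker_mk' _))
  interval_cases k
  simpa using hke

lemma aux_sub (hcard : Nat.card G = p ^ 3) (K : Subgroup G) :
    ∃ j ≤ 3, Nat.card K = p ^ j :=
  let ⟨j, hj, hje⟩ := (Nat.dvd_prime_pow (Fact.out (p := p.Prime))).1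
    (hcard ▸ Subgroup.card_subgroup_dvd_card K)
  ⟨j, hj, hje⟩

lemma aux_cent_le (hcard : Nat.card G = p ^ 3)
    {H : Subgroup G} (hH : ¬ H ≤ Subgroup.center G) :
    Nat.card (Subgroup.centralizer (H : Set G)) ≤ p ^ 2 := by
  have hp := Fact.out (p := p.Prime)
  obtain ⟨j, hj, hje⟩ := aux_sub hcard (Subgroup.centralizer (H : Set G))
  have hne : j ≠ 3 := by
    rintro rfl
    have : Subgroup.centralizer (H : Set G) = ⊤ :=
      Subgroup.eq_top_of_card_eq _ (by rw [hje, hcard])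
    exact hH (SetLike.coe_subset_coe.1 (Subgroup.centralizer_eq_top_iff_subset.1 this))
  rw [hje]
  exact Nat.pow_le_pow_right hp.pos (by omega)

lemma aux_mCD (hcard : Nat.card G = p ^ 3) (hz : Nat.card (Subgroup.center G) = p)
    (H : Subgroup G) :
    mCD H ≤ p ^ 4 ∧ (mCD H = p ^ 4 ↔ Subgroup.center G ≤ H) := by
  have hp := Fact.out (p := p.Prime)
  have hp1 : 1 < p := hp.one_lt
  have hlt34 : p ^ 3 < p ^ 4 := Nat.pow_lt_pow_right hp1 (by norm_num)
  obtain ⟨k, hk3, hke⟩ := aux_sub hcard H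
  have hzne : ¬ Subgroup.center G ≤ ⊥ := by
    intro h
    have : Nat.card (Subgroup.center G) = 1 := by
      rw [le_bot_iff.1 h] at hz ⊢
      exact Subgroup.card_bot
    omega
  interval_cases k
  · -- H = ⊥
    have hb : H = ⊥ := Subgroup.eq_bot_of_card_eq H (by simpa using hke)
    subst hb
    have hcent : Subgroup.centralizer ((⊥ : Subgroup G) : Set G) = ⊤ := by
      rw [Subgroup.centralizer_eq_top_iff_subset]
      rintro x hx
      rw [Subgroup.coe_bot, Set.mem_singleton_iff] at hx
      subst hx
      exact Subgroup.one_mem _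
    have : mCD (⊥ : Subgroup G) = p ^ 3 := by
      rw [mCD, hcent, Subgroup.card_bot, Subgroup.card_top, hcard, one_mul]
    rw [this]
    exact ⟨hlt34.le, by constructor <;> intro h <;> [omega; exact absurd h hzne]⟩
  · -- card H = p
    rw [pow_one] at hke
    by_cases hc : Subgroup.center G ≤ H
    · have heq : H = Subgroup.center G :=
        (Subgroup.eq_of_le_of_card_ge hc (by rw [hz, hke])).symm
      have hcent : Subgroup.centralizer (H : Set G) = ⊤ := by
        rw [heq, Subgroup.centralizer_eq_top_iff_subset]
      have : mCD H = p ^ 4 := by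
        rw [mCD, hcent, hke, Subgroup.card_top, hcard]; ring
      exact ⟨this.le, by simp [this, hc]⟩
    · have hH : ¬ H ≤ Subgroup.center G := by
        intro h
        exact hc (le_of_eq (Subgroup.eq_of_le_of_card_ge h (by rw [hz, hke])).symm)
      have hle : mCD H ≤ p ^ 3 := by
        have := aux_cent_le hcard hH
        calc mCD H ≤ p * p ^ 2 := by
              rw [mCD, hke]; exact Nat.mul_le_mul_left p this
          _ = p ^ 3 := by ring
      exact ⟨hle.trans hlt34.le, by constructor <;> intro h <;> [omega; exact absurd h hc]⟩
  · -- card H = p ^ 2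
    haveI : IsMulCommutative H := ⟨⟨IsPGroup.commutative_of_card_eq_prime_sq hke⟩⟩
    have hsub : H ≤ Subgroup.centralizer (H : Set G) := Subgroup.le_centralizer H
    have hH : ¬ H ≤ Subgroup.center G := by
      intro h
      have := Subgroup.card_le_of_le h
      rw [hke, hz] at this
      have h12 : p ^ 1 < p ^ 2 := Nat.pow_lt_pow_right hp1 (by norm_num)
      rw [pow_one] at h12
      omega
    have hcent : Nat.card (Subgroup.centralizer (H : Set G)) = p ^ 2 := by
      have h1 := aux_cent_le hcard hH
      have h2 : p ^ 2 ≤ Nat.card (Subgroup.centralizer (H : Set G)) := by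
        rw [← hke]; exact Subgroup.card_le_of_le hsub
      omega
    have hcenteq : Subgroup.centralizer (H : Set G) = H :=
      (Subgroup.eq_of_le_of_card_ge hsub (by rw [hke, hcent])).symm
    have hcle : Subgroup.center G ≤ H :=
      hcenteq ▸ Subgroup.center_le_centralizer (H : Set G)
    have : mCD H = p ^ 4 := by rw [mCD, hke, hcent]; ring
    exact ⟨this.le, by simp [this, hcle]⟩
  · -- H = ⊤
    have ht : H = ⊤ := Subgroup.eq_top_of_card_eq H (by rw [hke, hcard])
    subst ht
    have hcent : Subgroup.centralizer ((⊤ : Subgroup G) : Set G) = Subgroup.center G := by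
      rw [Subgroup.coe_top, Subgroup.centralizer_univ]
    have : mCD (⊤ : Subgroup G) = p ^ 4 := by
      rw [mCD, hcent, Subgroup.card_top, hcard, hz]; ring
    exact ⟨this.le, by simp [this]⟩

/-- The correspondence between subgroups containing the center and subgroups of the quotient. -/
noncomputable def auxCorr (G : Type*) [Group G] :
    {H : Subgroup G // Subgroup.center G ≤ H} ≃ Subgroup (G ⧸ Subgroup.center G) where
  toFun H := Subgroup.map (QuotientGroup.mk' _) H.1
  invFun K := ⟨Subgroup.comap (QuotientGroup.mk' _) K, by
    intro g hg
    simp only [Subgroup.mem_comap]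
    have h1 : QuotientGroup.mk' (Subgroup.center G) g = 1 := by
      rw [← MonoidHom.mem_ker, QuotientGroup.ker_mk']; exact hg
    rw [h1]; exact K.one_mem⟩
  left_inv H := by
    ext1
    simp only
    rw [Subgroup.comap_map_eq, QuotientGroup.ker_mk']
    exact sup_eq_left.2 H.2
  right_inv K := Subgroup.map_comap_eq_self_of_surjective
    (QuotientGroup.mk'_surjective _) K

end Main

theorem stmt11 {p : ℕ} [Fact p.Prime] {G : Type*} [Group G] [Finite G]
    (hcard : Nat.card G = p ^ 3) (hna : ¬ ∀ a b : G, a * b = b * a) :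
    CD G = {H : Subgroup G | Subgroup.center G ≤ H} ∧
      Nat.card (CD G) = p + 3 := by
  have hp := Fact.out (p := p.Prime)
  have hz : Nat.card (Subgroup.center G) = p := aux_center_card hcard hna
  -- mStar G = p ^ 4
  have hbdd : BddAbove (Set.range fun H : Subgroup G => mCD H) := by
    refine ⟨p ^ 4, ?_⟩
    rintro x ⟨H, rfl⟩
    exact (aux_mCD hcard hz H).1
  have hstar : mStar G = p ^ 4 := by
    rw [mStar]
    apply le_antisymm
    · apply csSup_le (Set.range_nonempty _)
      rintro x ⟨H, rfl⟩
      exact (aux_mCD hcard hz H).1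
    · have hcen : mCD (Subgroup.center G) = p ^ 4 :=
        (aux_mCD hcard hz (Subgroup.center G)).2.mpr le_rfl
      calc p ^ 4 = mCD (Subgroup.center G) := hcen.symm
        _ ≤ _ := le_csSup hbdd ⟨Subgroup.center G, rfl⟩
  have hset : CD G = {H : Subgroup G | Subgroup.center G ≤ H} := by
    ext H
    simp only [CD, Set.mem_setOf_eq, hstar]
    exact (aux_mCD hcard hz H).2
  refine ⟨hset, ?_⟩
  -- the quotient
  have hqcard : Nat.card (G ⧸ Subgroup.center G) = p ^ 2 := by
    have h := (Subgroup.card_eq_card_quotient_mul_card_subgroup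
      (Subgroup.center G)).symm
    rw [hz, hcard] at h
    have h3 : p ^ 3 = p ^ 2 * p := by ring
    rw [h3] at h
    exact Nat.eq_of_mul_eq_mul_right hp.pos h
  have hnc : ¬ IsCyclic (G ⧸ Subgroup.center G) := by
    intro hc
    exact hna (commutative_of_cyclic_center_quotient (QuotientGroup.mk' _)
      (le_of_eq (QuotientGroup.ker_mk' _)))
  rw [hset]
  have e1 : {H : Subgroup G | Subgroup.center G ≤ H} ≃
      Subgroup (G ⧸ Subgroup.center G) := auxCorr G
  rw [Nat.card_congr e1]
  exact aux_count hqcard hnc
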